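/- Let a, b > 0 be real numbers and C₁, C₂, C₃, C₄, C₅ ∈ ℝ⁵ constant vectors, and set Θ(t,u) = C₁ + cos(a t)·C₂ + sin(a t)·C₃ + cos(b u)·C₄ + sin(b u)·C₅. Suppose that for all (t,u) ∈ ℝ²: ⟨Θ, Θ⟩ = 1, ⟨∂ₜΘ, ∂ₜΘ⟩ = 1, ⟨∂ᵤΘ, ∂ᵤΘ⟩ = 1, and ⟨∂ₜΘ, ∂ᵤΘ⟩ = 0, where ⟨·,·⟩ is the Euclidean inner product on ℝ⁵. Then ⟨C₂,C₂⟩ = ⟨C₃,C₃⟩ = 1/a², ⟨C₄,C₄⟩ = ⟨C₅,C₅⟩ = 1/b², the vectors C₂, C₃, C₄, C₅ are pairwise orthogonal, C₁ is orthogonal to each of C₂, C₃, C₄, C₅, and ⟨C₁,C₁⟩ = 1 − 1/a² − 1/b². -/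

import Mathlib

/-- The Euclidean inner product on `ℝ⁵`. -/
def euc5 (x y : Fin 5 → ℝ) : ℝ :=
  x 0 * y 0 + x 1 * y 1 + x 2 * y 2 + x 3 * y 3 + x 4 * y 4

private lemma nz_cancel {x y : ℝ} (hx : x ≠ 0) (h : x * y = 0) : y = 0 :=
  (mul_eq_zero.mp h).resolve_left hx

/-- Normalization step in the proof of Proposition 4.1: the inner-product
relations among the constant vectors of the flat integral surface in `S⁴`. -/
theorem stmt_5 (a b : ℝ) (ha : 0 < a) (hb : 0 < b)
    (C₁ C₂ C₃ C₄ C₅ : Fin 5 → ℝ) (Θ : ℝ → ℝ → Fin 5 → ℝ)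
    (hΘ : ∀ t u : ℝ, Θ t u =
      C₁ + Real.cos (a * t) • C₂ + Real.sin (a * t) • C₃
        + Real.cos (b * u) • C₄ + Real.sin (b * u) • C₅)
    (h1 : ∀ t u : ℝ, euc5 (Θ t u) (Θ t u) = 1)
    (h2 : ∀ t u : ℝ, euc5 (deriv (fun t' => Θ t' u) t) (deriv (fun t' => Θ t' u) t) = 1)
    (h3 : ∀ t u : ℝ, euc5 (deriv (fun u' => Θ t u') u) (deriv (fun u' => Θ t u') u) = 1)
    (h4 : ∀ t u : ℝ, euc5 (deriv (fun t' => Θ t' u) t) (deriv (fun u' => Θ t u') u) = 0) :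
    euc5 C₂ C₂ = 1 / a ^ 2 ∧ euc5 C₃ C₃ = 1 / a ^ 2 ∧
    euc5 C₄ C₄ = 1 / b ^ 2 ∧ euc5 C₅ C₅ = 1 / b ^ 2 ∧
    euc5 C₂ C₃ = 0 ∧ euc5 C₂ C₄ = 0 ∧ euc5 C₂ C₅ = 0 ∧
    euc5 C₃ C₄ = 0 ∧ euc5 C₃ C₅ = 0 ∧ euc5 C₄ C₅ = 0 ∧
    euc5 C₁ C₂ = 0 ∧ euc5 C₁ C₃ = 0 ∧ euc5 C₁ C₄ = 0 ∧ euc5 C₁ C₅ = 0 ∧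
    euc5 C₁ C₁ = 1 - 1 / a ^ 2 - 1 / b ^ 2 := by
  have ha' : a ≠ 0 := ha.ne'
  have hb' : b ≠ 0 := hb.ne'
  -- compute the two partial derivatives
  have hdt : ∀ t u : ℝ, deriv (fun t' => Θ t' u) t
      = (-(a * Real.sin (a*t))) • C₂ + (a * Real.cos (a*t)) • C₃ := by
    intro t u
    have hfun : (fun t' => Θ t' u)
        = fun t' => (C₁ + Real.cos (b*u) • C₄ + Real.sin (b*u) • C₅)
            + (Real.cos (a*t') • C₂ + Real.sin (a*t') • C₃) := by
      funext t'; rw [hΘ]; module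
    rw [hfun]
    have hc : HasDerivAt (fun t' : ℝ => Real.cos (a*t')) (-(a * Real.sin (a*t))) t := by
      simpa [mul_comm, Function.comp_def] using (Real.hasDerivAt_cos (a*t)).comp t ((hasDerivAt_id t).const_mul a)
    have hs : HasDerivAt (fun t' : ℝ => Real.sin (a*t')) (a * Real.cos (a*t)) t := by
      simpa [mul_comm, Function.comp_def] using (Real.hasDerivAt_sin (a*t)).comp t ((hasDerivAt_id t).const_mul a)
    exact (((hc.smul_const C₂).add (hs.smul_const C₃)).const_add _).deriv
  have hdu : ∀ t u : ℝ, deriv (fun u' => Θ t u') u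
      = (-(b * Real.sin (b*u))) • C₄ + (b * Real.cos (b*u)) • C₅ := by
    intro t u
    have hfun : (fun u' => Θ t u')
        = fun u' => (C₁ + Real.cos (a*t) • C₂ + Real.sin (a*t) • C₃)
            + (Real.cos (b*u') • C₄ + Real.sin (b*u') • C₅) := by
      funext u'; rw [hΘ]; module
    rw [hfun]
    have hc : HasDerivAt (fun u' : ℝ => Real.cos (b*u')) (-(b * Real.sin (b*u))) u := by
      simpa [mul_comm, Function.comp_def] using (Real.hasDerivAt_cos (b*u)).comp u ((hasDerivAt_id u).const_mul b)
    have hs : HasDerivAt (fun u' : ℝ => Real.sin (b*u')) (b * Real.cos (b*u)) u := by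
      simpa [mul_comm, Function.comp_def] using (Real.hasDerivAt_sin (b*u)).comp u ((hasDerivAt_id u).const_mul b)
    exact (((hc.smul_const C₄).add (hs.smul_const C₅)).const_add _).deriv
  -- special angle values
  have ra2 : a * (Real.pi/(2*a)) = Real.pi/2 := by field_simp
  have rb2 : b * (Real.pi/(2*b)) = Real.pi/2 := by field_simp
  have ra2' : a * (-(Real.pi/(2*a))) = -(Real.pi/2) := by rw [mul_neg, ra2]
  have rb2' : b * (-(Real.pi/(2*b))) = -(Real.pi/2) := by rw [mul_neg, rb2]
  have ra1 : a * (Real.pi/a) = Real.pi := by field_simp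
  have rb1 : b * (Real.pi/b) = Real.pi := by field_simp
  have ras : a * (Real.arcsin (3/5) / a) = Real.arcsin (3/5) := by field_simp
  have rbs : b * (Real.arcsin (3/5) / b) = Real.arcsin (3/5) := by field_simp
  have hs35 : Real.sin (Real.arcsin (3/5)) = 3/5 := Real.sin_arcsin (by norm_num) (by norm_num)
  have hc35 : Real.cos (Real.arcsin (3/5)) = 4/5 := by
    rw [Real.cos_arcsin, show (1 - (3/5:ℝ)^2) = (4/5)^2 by norm_num, Real.sqrt_sq (by norm_num)]
  -- specialized equations
  have hA := h2 0 0
  have hB := h2 (Real.pi/(2*a)) 0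
  have hC := h2 (Real.arcsin (3/5) / a) 0
  have hD := h3 0 0
  have hE := h3 0 (Real.pi/(2*b))
  have hF := h3 0 (Real.arcsin (3/5) / b)
  have hG := h4 0 0
  have hH := h4 (Real.pi/(2*a)) 0
  have hI := h4 0 (Real.pi/(2*b))
  have hJ := h4 (Real.pi/(2*a)) (Real.pi/(2*b))
  have hK := h1 0 0
  have hL := h1 (Real.pi/a) 0
  have hM := h1 (Real.pi/(2*a)) 0
  have hN := h1 (-(Real.pi/(2*a))) 0
  have hO := h1 0 (Real.pi/b)
  have hP := h1 0 (Real.pi/(2*b))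
  have hQ := h1 0 (-(Real.pi/(2*b)))
  rw [hdt] at hA hB hC hG hH hI hJ
  rw [hdu] at hD hE hF hG hH hI hJ
  rw [hΘ] at hK hL hM hN hO hP hQ
  simp only [euc5, Pi.add_apply, Pi.smul_apply, smul_eq_mul, mul_zero, Real.sin_zero,
    Real.cos_zero, neg_zero, zero_mul, zero_add, add_zero, mul_one, one_mul,
    ra2, rb2, ra2', rb2', ra1, rb1, ras, rbs, Real.sin_neg, Real.cos_neg,
    Real.sin_pi_div_two, Real.cos_pi_div_two, Real.sin_pi, Real.cos_pi,
    hs35, hc35, neg_mul, neg_neg] at hA hB hC hD hE hF hG hH hI hJ hK hL hM hN hO hP hQ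
  -- the fifteen relations
  have s22 : euc5 C₂ C₂ = 1/a^2 := by
    rw [eq_div_iff (pow_ne_zero 2 ha')]; simp only [euc5]; linear_combination hB
  have s33 : euc5 C₃ C₃ = 1/a^2 := by
    rw [eq_div_iff (pow_ne_zero 2 ha')]; simp only [euc5]; linear_combination hA
  have s44 : euc5 C₄ C₄ = 1/b^2 := by
    rw [eq_div_iff (pow_ne_zero 2 hb')]; simp only [euc5]; linear_combination hE
  have s55 : euc5 C₅ C₅ = 1/b^2 := by
    rw [eq_div_iff (pow_ne_zero 2 hb')]; simp only [euc5]; linear_combination hD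
  have s23 : euc5 C₂ C₃ = 0 := by
    refine nz_cancel (pow_ne_zero 2 ha') ?_
    simp only [euc5]; linear_combination (3/8)*hB + (2/3)*hA - (25/24)*hC
  have s45 : euc5 C₄ C₅ = 0 := by
    refine nz_cancel (pow_ne_zero 2 hb') ?_
    simp only [euc5]; linear_combination (3/8)*hE + (2/3)*hD - (25/24)*hF
  have s35 : euc5 C₃ C₅ = 0 := by
    refine nz_cancel ha' (nz_cancel hb' ?_)
    simp only [euc5]; linear_combination hG
  have s25 : euc5 C₂ C₅ = 0 := by
    refine nz_cancel ha' (nz_cancel hb' ?_)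
    simp only [euc5]; linear_combination -hH
  have s34 : euc5 C₃ C₄ = 0 := by
    refine nz_cancel ha' (nz_cancel hb' ?_)
    simp only [euc5]; linear_combination -hI
  have s24 : euc5 C₂ C₄ = 0 := by
    refine nz_cancel ha' (nz_cancel hb' ?_)
    simp only [euc5]; linear_combination hJ
  have s24' := s24; have s34' := s34; have s25' := s25
  simp only [euc5] at s24' s34' s25'
  have s12 : euc5 C₁ C₂ = 0 := by
    simp only [euc5]; linear_combination (1/4)*hK - (1/4)*hL - s24'
  have s13 : euc5 C₁ C₃ = 0 := by
    simp only [euc5]; linear_combination (1/4)*hM - (1/4)*hN - s34'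
  have s14 : euc5 C₁ C₄ = 0 := by
    simp only [euc5]; linear_combination (1/4)*hK - (1/4)*hO - s24'
  have s15 : euc5 C₁ C₅ = 0 := by
    simp only [euc5]; linear_combination (1/4)*hP - (1/4)*hQ - s25'
  have s11 : euc5 C₁ C₁ = 1 - 1/a^2 - 1/b^2 := by
    have s22' := s22; have s44' := s44; have s12' := s12; have s14' := s14
    simp only [euc5] at s22' s44' s12' s14'
    simp only [euc5]
    linear_combination hK - s22' - s44' - 2*s12' - 2*s14' - 2*s24'
  exact ⟨s22, s33, s44, s55, s23, s24, s25, s34, s35, s45, s12, s13, s14, s15, s11⟩
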